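/- Assume α > 0 and −2α < m < 0. Let f : ℝ → ℝ solve the power-law ODE on [0,∞) with f(t) > 0 for all t ≥ 0, f(t) → ∞, f'(t) → 0 and f''(t) → 0 as t → ∞. Then f(t)·f''(t) → 0 as t → ∞, and the derivative of g(t) = |f''(t)|^{n−1}·f''(t) converges to 0 as t → ∞. -/

import Mathlib

open Real Set Filter Topology

/-- The signed power nonlinearity `x ↦ |x|^(n-1) * x`. -/
noncomputable def powLaw (n x : ℝ) : ℝ := |x| ^ (n - 1) * x

/-- `f` solves the power-law ODE `(|f''|^(n-1) f'')' + α f f'' - m (f')² = 0` on `I`: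
`f` is twice continuously differentiable on `I`, `t ↦ |f''(t)|^(n-1) f''(t)` is
differentiable on `I`, and the equation holds on `I`. -/
def SolvesPowerLawODE (n α m : ℝ) (f : ℝ → ℝ) (I : Set ℝ) : Prop :=
  (∀ t ∈ I, DifferentiableAt ℝ f t) ∧
  (∀ t ∈ I, DifferentiableAt ℝ (deriv f) t) ∧
  ContinuousOn (deriv (deriv f)) I ∧
  (∀ t ∈ I, DifferentiableAt ℝ (fun s => powLaw n (deriv (deriv f) s)) t) ∧
  (∀ t ∈ I, deriv (fun s => powLaw n (deriv (deriv f) s)) t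
      + α * f t * deriv (deriv f) t - m * (deriv f t) ^ 2 = 0)

lemma powLaw_neg (n x : ℝ) : powLaw n (-x) = -powLaw n x := by
  simp [powLaw, abs_neg, mul_neg]

lemma abs_powLaw (n x : ℝ) (hn : n ≠ 0) : |powLaw n x| = |x| ^ n := by
  rcases eq_or_ne x 0 with h | h
  · simp [powLaw, h, Real.zero_rpow hn]
  · rw [powLaw, abs_mul, abs_of_nonneg (Real.rpow_nonneg (abs_nonneg x) _),
      ← Real.rpow_add_one (abs_ne_zero.mpr h)]
    ring_nf

lemma powLaw_of_nonneg (n x : ℝ) (hn : n ≠ 0) (hx : 0 ≤ x) : powLaw n x = x ^ n := by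
  rcases eq_or_lt_of_le hx with h | h
  · simp [powLaw, ← h, Real.zero_rpow hn]
  · rw [powLaw, abs_of_pos h, ← Real.rpow_add_one (ne_of_gt h)]
    ring_nf

lemma powLaw_strictMono {n : ℝ} (hn : 0 < n) : StrictMono (powLaw n) := by
  intro x y hxy
  rcases le_or_gt 0 x with hx | hx
  · rw [powLaw_of_nonneg n x (ne_of_gt hn) hx,
      powLaw_of_nonneg n y (ne_of_gt hn) (le_trans hx hxy.le)]
    exact Real.rpow_lt_rpow hx hxy hn
  · rcases le_or_gt 0 y with hy | hy
    · have h1 : powLaw n x < 0 :=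
        mul_neg_of_pos_of_neg (Real.rpow_pos_of_pos (abs_pos.mpr (ne_of_lt hx)) _) hx
      have h2 : 0 ≤ powLaw n y := mul_nonneg (Real.rpow_nonneg (abs_nonneg y) _) hy
      linarith
    · have h := Real.rpow_lt_rpow (le_of_lt (neg_pos.mpr hy)) (neg_lt_neg hxy) hn
      have e1 : powLaw n x = -((-x) ^ n) := by
        rw [← powLaw_of_nonneg n (-x) (ne_of_gt hn) (by linarith), ← powLaw_neg]; ring_nf
      have e2 : powLaw n y = -((-y) ^ n) := by
        rw [← powLaw_of_nonneg n (-y) (ne_of_gt hn) (by linarith), ← powLaw_neg]; ring_nf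
      rw [e1, e2]; linarith

lemma powLaw_mul {n a : ℝ} (ha : 0 < a) (x : ℝ) :
    powLaw n (a * x) = a ^ n * powLaw n x := by
  unfold powLaw
  rw [abs_mul, abs_of_pos ha, Real.mul_rpow (le_of_lt ha) (abs_nonneg x)]
  have h2 : a ^ (n - 1) * a = a ^ n := by
    rw [← Real.rpow_add_one (ne_of_gt ha)]; ring_nf
  linear_combination (|x| ^ (n - 1) * x) * h2

lemma trap {G : ℝ → ℝ} {T c E : ℝ} (hc : 0 < c)
    (hdiff : ∀ t, T ≤ t → DifferentiableAt ℝ G t)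
    (hd : ∀ t, T ≤ t → E ≤ G t → deriv G t ≤ -c) :
    ∀ᶠ t in Filter.atTop, G t ≤ E := by
  have hcont : ∀ t, T ≤ t → ContinuousAt G t := fun t ht => (hdiff t ht).continuousAt
  have stepA : ∃ s, T ≤ s ∧ G s ≤ E := by
    by_contra hA
    push_neg at hA
    have hgt : ∀ t, T ≤ t → E < G t := fun t ht => hA t ht
    have hanti : AntitoneOn (fun t => G t + c * t) (Set.Ici T) := by
      apply antitoneOn_of_deriv_nonpos (convex_Ici T)
      · exact fun t ht => ((hdiff t ht).continuousAt.add (by fun_prop)).continuousWithinAt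
      · intro t ht
        rw [interior_Ici] at ht
        exact ((hdiff t (le_of_lt ht)).add (by fun_prop)).differentiableWithinAt
      · intro t ht
        rw [interior_Ici] at ht
        have ht' : T ≤ t := le_of_lt ht
        rw [deriv_fun_add (hdiff t ht') (by fun_prop), deriv_const_mul _ (by fun_prop)]
        have := hd t ht' (le_of_lt (hgt t ht'))
        simp only [deriv_id'']
        linarith
    set t1 := T + (G T - E + 1) / c with ht1def
    have hpos : 0 < (G T - E + 1) / c := div_pos (by linarith [hgt T le_rfl]) hc
    have hTt1 : T ≤ t1 := by rw [ht1def]; linarith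
    have h2 := hanti (Set.self_mem_Ici) hTt1 hTt1
    simp only at h2
    have h3 : c * (t1 - T) = G T - E + 1 := by
      rw [ht1def]; field_simp; ring
    have := hgt t1 hTt1
    nlinarith
  obtain ⟨s, hTs, hs⟩ := stepA
  rw [Filter.eventually_atTop]
  refine ⟨s, fun t hst => ?_⟩
  by_contra hgt
  push_neg at hgt
  have hst' : s < t := by
    rcases lt_or_eq_of_le hst with h | h
    · exact h
    · exfalso; rw [← h] at hgt; linarith
  have hGcont : ContinuousOn G (Set.Icc s t) := fun r hr =>
    (hcont r (le_trans hTs hr.1)).continuousWithinAt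
  set S := Set.Icc s t ∩ G ⁻¹' (Set.Iic E) with hS
  have hSne : S.Nonempty := ⟨s, ⟨le_rfl, le_of_lt hst'⟩, hs⟩
  have hSbdd : BddAbove S := ⟨t, fun r hr => hr.1.2⟩
  have hSclosed : IsClosed S :=
    hGcont.preimage_isClosed_of_isClosed isClosed_Icc isClosed_Iic
  set u := sSup S with hu
  have huS : u ∈ S := hSclosed.csSup_mem hSne hSbdd
  have hsu : s ≤ u := huS.1.1
  have hut : u ≤ t := huS.1.2
  have hGu : G u ≤ E := huS.2
  have hgtu : ∀ r, u < r → r ≤ t → E < G r := by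
    intro r hur hrt
    by_contra hle
    push_neg at hle
    have hrS : r ∈ S := ⟨⟨le_trans hsu (le_of_lt hur), hrt⟩, hle⟩
    have := le_csSup hSbdd hrS
    linarith
  have hanti : AntitoneOn G (Set.Icc u t) := by
    apply antitoneOn_of_deriv_nonpos (convex_Icc u t)
    · exact fun r hr => (hcont r (le_trans hTs (le_trans hsu hr.1))).continuousWithinAt
    · intro r hr
      rw [interior_Icc] at hr
      exact (hdiff r (le_trans hTs (le_trans hsu hr.1.le))).differentiableWithinAt
    · intro r hr
      rw [interior_Icc] at hr
      have := hd r (le_trans hTs (le_trans hsu hr.1.le)) (le_of_lt (hgtu r hr.1 hr.2.le))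
      linarith
  have hfin := hanti ⟨le_rfl, hut⟩ ⟨hut, le_rfl⟩ hut
  linarith

theorem stmt_13 (n α m : ℝ) (hn : 1 < n) (hα : 0 < α) (hm₁ : -2 * α < m) (hm₂ : m < 0)
    (f : ℝ → ℝ)
    (hf : SolvesPowerLawODE n α m f (Set.Ici 0))
    (hpos : ∀ t : ℝ, 0 ≤ t → 0 < f t)
    (hinf : Filter.Tendsto f Filter.atTop Filter.atTop)
    (hd0 : Filter.Tendsto (deriv f) Filter.atTop (nhds 0))
    (hd0' : Filter.Tendsto (deriv (deriv f)) Filter.atTop (nhds 0)) :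
    Filter.Tendsto (fun t => f t * deriv (deriv f) t) Filter.atTop (nhds 0) ∧
    Filter.Tendsto (deriv (fun s => powLaw n (deriv (deriv f) s)))
      Filter.atTop (nhds 0) := by
  have hn0 : n ≠ 0 := by linarith
  have hnpos : (0:ℝ) < n := by linarith
  set f1 := deriv f with hf1
  set f2 := deriv (deriv f) with hf2
  set g := fun s => powLaw n (f2 s) with hgdef
  -- the ODE rearranged
  have hgderiv : ∀ t, 0 ≤ t → deriv g t = m * (f1 t) ^ 2 - α * (f t * f2 t) := by
    intro t ht
    have := hf.2.2.2.2 t ht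
    simp only [hgdef, hf1, hf2] at this ⊢
    linarith [this]
  -- g tends to 0
  have hgto0 : Filter.Tendsto g Filter.atTop (nhds 0) := by
    apply squeeze_zero_norm (a := fun t => |f2 t| ^ n)
    · intro t
      exact le_of_eq (abs_powLaw n (f2 t) hn0)
    · have h1 : Filter.Tendsto (fun t => |f2 t|) Filter.atTop (nhds 0) := by
        simpa using hd0'.abs
      have := h1.rpow_const (p := n) (Or.inr (le_of_lt hnpos))
      simpa [Real.zero_rpow hn0] using this
  -- f' / f tends to 0
  have hq : Filter.Tendsto (fun t => f1 t / f t) Filter.atTop (nhds 0) := by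
    apply squeeze_zero_norm' (a := fun t => |f1 t|)
    · filter_upwards [hinf.eventually_ge_atTop 1] with t h1f
      rw [Real.norm_eq_abs, abs_div]
      exact div_le_self (abs_nonneg _) (le_trans h1f (le_abs_self _))
    · simpa using hd0.abs
  -- the perturbation term B
  set B := fun t => n * (f1 t / f t) * g t + m * (f1 t) ^ 2 with hBdef
  have hB0 : Filter.Tendsto B Filter.atTop (nhds 0) := by
    have : Filter.Tendsto (fun t => n * (f1 t / f t) * g t + m * (f1 t) ^ 2)
        Filter.atTop (nhds (n * 0 * 0 + m * 0 ^ 2)) :=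
      ((tendsto_const_nhds.mul hq).mul hgto0).add (tendsto_const_nhds.mul (hd0.pow 2))
    simpa using this
  -- G and its derivative
  set G := fun t => powLaw n (f t * f2 t) with hGdef
  have hGder : ∀ t, 0 ≤ t →
      HasDerivAt G (f t ^ n * B t - α * f t ^ n * (f t * f2 t)) t := by
    intro t ht
    have hft : 0 < f t := hpos t ht
    have hf' : HasDerivAt f (f1 t) t := (hf.1 t ht).hasDerivAt
    have hrpow : HasDerivAt (fun s => f s ^ n) (f1 t * n * f t ^ (n - 1)) t :=
      hf'.rpow_const (Or.inl (ne_of_gt hft))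
    have hg' : HasDerivAt g (deriv g t) t := (hf.2.2.2.1 t ht).hasDerivAt
    have hprod : HasDerivAt (fun s => f s ^ n * g s)
        (f1 t * n * f t ^ (n - 1) * g t + f t ^ n * deriv g t) t := hrpow.mul hg'
    have hev : ∀ᶠ s in nhds t, 0 < f s :=
      (hf.1 t ht).continuousAt.eventually (eventually_gt_nhds hft)
    have heq : G =ᶠ[nhds t] fun s => f s ^ n * g s := by
      filter_upwards [hev] with s hs
      simp only [hGdef, hgdef]
      exact powLaw_mul hs (f2 s)
    have hG := hprod.congr_of_eventuallyEq heq
    refine hG.congr_deriv (Eq.symm ?_)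
    rw [hgderiv t ht]
    have e1 : f t ^ (n - 1) = f t ^ n / f t := Real.rpow_sub_one (ne_of_gt hft) n
    have key : f t ^ n * (f1 t / f t) = f t ^ (n - 1) * f1 t := by
      rw [e1, div_mul_eq_mul_div, mul_div_assoc]
    simp only [hBdef]
    linear_combination (n * g t) * key
  -- smallness of G
  have hGsmall : ∀ E : ℝ, 0 < E → ∀ᶠ t in Filter.atTop, |G t| ≤ E := by
    intro E hE
    set e := E ^ (1/n) with hedef
    have he : 0 < e := Real.rpow_pos_of_pos hE _
    have heE : e ^ n = E := by
      rw [hedef, ← Real.rpow_mul (le_of_lt hE), one_div_mul_cancel hn0, Real.rpow_one]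
    have hcpos : 0 < α * e / 2 := by positivity
    have habs : Filter.Tendsto (fun t => |B t|) Filter.atTop (nhds 0) := by
      simpa using hB0.abs
    have hev : ∀ᶠ t in Filter.atTop, (0:ℝ) ≤ t ∧ 1 ≤ f t ∧ |B t| ≤ α * e / 2 := by
      filter_upwards [eventually_ge_atTop (0:ℝ), hinf.eventually_ge_atTop 1,
        habs.eventually (eventually_le_nhds hcpos)] with t h1 h2 h3
      exact ⟨h1, h2, h3⟩
    obtain ⟨T, hT⟩ := Filter.eventually_atTop.mp hev
    have hdiff : ∀ t, T ≤ t → DifferentiableAt ℝ G t :=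
      fun t ht => (hGder t (hT t ht).1).differentiableAt
    have hfn1 : ∀ t, T ≤ t → 1 ≤ f t ^ n := by
      intro t ht
      calc (1:ℝ) = 1 ^ n := (Real.one_rpow n).symm
      _ ≤ f t ^ n := Real.rpow_le_rpow zero_le_one (hT t ht).2.1 (le_of_lt hnpos)
    have hup : ∀ᶠ t in Filter.atTop, G t ≤ e ^ n := by
      apply trap hcpos hdiff
      intro t ht hGe
      obtain ⟨ht0, h1f, hB⟩ := hT t ht
      rw [(hGder t ht0).deriv]
      have hfe : e ≤ f t * f2 t := by
        apply (powLaw_strictMono hnpos).le_iff_le.mp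
        rw [powLaw_of_nonneg n e hn0 (le_of_lt he)]
        exact hGe
      have hBle : B t ≤ α * e / 2 := (abs_le.mp hB).2
      have hkey : B t - α * (f t * f2 t) ≤ -(α * e / 2) := by nlinarith
      have h2 := mul_le_mul_of_nonneg_left hkey
        (le_of_lt (Real.rpow_pos_of_pos (hpos t ht0) n))
      nlinarith [hfn1 t ht, hcpos]
    have hdown : ∀ᶠ t in Filter.atTop, -G t ≤ e ^ n := by
      apply trap (G := fun t => -G t) hcpos (fun t ht => (hdiff t ht).neg)
      intro t ht hGe
      obtain ⟨ht0, h1f, hB⟩ := hT t ht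
      rw [deriv.fun_neg, (hGder t ht0).deriv]
      have hfe : f t * f2 t ≤ -e := by
        apply (powLaw_strictMono hnpos).le_iff_le.mp
        rw [powLaw_neg, powLaw_of_nonneg n e hn0 (le_of_lt he)]
        simp only [hGdef] at hGe ⊢
        linarith
      have hBle : -(α * e / 2) ≤ B t := (abs_le.mp hB).1
      have hkey : -(B t) + α * (f t * f2 t) ≤ -(α * e / 2) := by nlinarith
      have h2 := mul_le_mul_of_nonneg_left hkey
        (le_of_lt (Real.rpow_pos_of_pos (hpos t ht0) n))
      nlinarith [hfn1 t ht, hcpos]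
    filter_upwards [hup, hdown] with t h1 h2
    rw [← heE]
    exact abs_le.mpr ⟨by linarith, h1⟩
  -- G tends to 0
  have hGto0 : Filter.Tendsto G Filter.atTop (nhds 0) := by
    rw [NormedAddCommGroup.tendsto_nhds_zero]
    intro ε hε
    filter_upwards [hGsmall (ε/2) (by linarith)] with t ht
    rw [Real.norm_eq_abs]
    linarith
  -- f * f'' tends to 0
  have hmain : Filter.Tendsto (fun t => f t * f2 t) Filter.atTop (nhds 0) := by
    apply squeeze_zero_norm (a := fun t => |G t| ^ (1/n))
    · intro t
      rw [Real.norm_eq_abs]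
      apply le_of_eq
      rw [hGdef, abs_powLaw n _ hn0, ← Real.rpow_mul (abs_nonneg _),
        mul_one_div_cancel hn0, Real.rpow_one]
    · have h1 : Filter.Tendsto (fun t => |G t|) Filter.atTop (nhds 0) := by
        simpa using hGto0.abs
      have := h1.rpow_const (p := 1/n) (Or.inr (by positivity))
      simpa [Real.zero_rpow (inv_ne_zero hn0)] using this
  refine ⟨hmain, ?_⟩
  have hrhs : Filter.Tendsto (fun t => m * (f1 t) ^ 2 - α * (f t * f2 t))
      Filter.atTop (nhds 0) := by
    have : Filter.Tendsto (fun t => m * (f1 t) ^ 2 - α * (f t * f2 t))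
        Filter.atTop (nhds (m * 0 ^ 2 - α * 0)) :=
      (tendsto_const_nhds.mul (hd0.pow 2)).sub (tendsto_const_nhds.mul hmain)
    simpa using this
  apply hrhs.congr'
  filter_upwards [eventually_ge_atTop (0:ℝ)] with t ht
  exact (hgderiv t ht).symm
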